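/- arXiv:0906.2862 — 2 statements merged into one kernel-verified Lean document; each statement's English description precedes it below -/
import Mathlib

section
/- Let R be an integral domain and let x ∈ R be a nonzero element such that ⋂_{n≥0} xⁿR = 0. Let M be a finitely generated free R-module and let A and B be R-submodules of M. Assume that the natural maps A/xA → M/xM and B/xB → M/xM induced by the inclusions A, B ⊆ M are injective (equivalently, A ∩ xM ⊆ xA and B ∩ xM ⊆ xB), and that the images of A and B in M/xM intersect trivially (equivalently, (A + xM) ∩ (B + xM) ⊆ xM). Then A ∩ B = 0. -/
open Pointwise

/-- Lemma 4.2.4.1 (abstracted): if `R` is a domain, `x ≠ 0` with `⋂ₙ xⁿR = 0`,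
`M` a finitely generated free `R`-module and `A, B ⊆ M` submodules such that
`A/xA → M/xM` and `B/xB → M/xM` are injective and the images of `A` and `B` in
`M/xM` intersect trivially, then `A ∩ B = 0`. -/
theorem trivial_intersection_of_coinvariants
    {R : Type*} [CommRing R] [IsDomain R] (x : R) (hx : x ≠ 0)
    (hxint : ∀ r : R, (∀ n : ℕ, x ^ n ∣ r) → r = 0)
    {M : Type*} [AddCommGroup M] [Module R M] [Module.Free R M] [Module.Finite R M]
    (A B : Submodule R M)
    (hA : A ⊓ x • (⊤ : Submodule R M) ≤ x • A)
    (hB : B ⊓ x • (⊤ : Submodule R M) ≤ x • B)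
    (hAB : (A ⊔ x • (⊤ : Submodule R M)) ⊓ (B ⊔ x • (⊤ : Submodule R M)) ≤
      x • (⊤ : Submodule R M)) :
    A ⊓ B = ⊥ := by
  rw [eq_bot_iff]
  intro m hm
  have step : ∀ m ∈ A ⊓ B, ∃ m' ∈ A ⊓ B, m = x • m' := by
    intro m hm
    have hmx : m ∈ x • (⊤ : Submodule R M) :=
      hAB ⟨Submodule.mem_sup_left hm.1, Submodule.mem_sup_left hm.2⟩
    have hmA : m ∈ x • A := hA ⟨hm.1, hmx⟩
    have hmB : m ∈ x • B := hB ⟨hm.2, hmx⟩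
    rw [← SetLike.mem_coe, Submodule.coe_pointwise_smul, Set.mem_smul_set] at hmA hmB
    obtain ⟨a, ha, rfl⟩ := hmA
    obtain ⟨b, hb, hba⟩ := hmB
    have hab : b = a := smul_right_injective M hx hba
    subst hab
    exact ⟨b, ⟨ha, hb⟩, rfl⟩
  have key : ∀ n : ℕ, ∃ m', m' ∈ A ⊓ B ∧ m = x ^ n • m' := by
    intro n
    induction n with
    | zero => exact ⟨m, hm, by simp⟩
    | succ n ih =>
      obtain ⟨m', hm', rfl⟩ := ih
      obtain ⟨m'', hm'', rfl⟩ := step m' hm'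
      exact ⟨m'', hm'', by rw [pow_succ, mul_smul]⟩
  let b := Module.Free.chooseBasis R M
  have hm0 : m = 0 := by
    have : ∀ i, b.repr m i = 0 := by
      intro i
      apply hxint
      intro n
      obtain ⟨m', _, rfl⟩ := key n
      exact ⟨b.repr m' i, by simp [mul_comm]⟩
    have : b.repr m = 0 := Finsupp.ext this
    simpa using congrArg b.repr.symm this
  simp [hm0]
end

section
/- Let K be a field of characteristic 0 and let b ∈ K((X)) be a formal Laurent series. Set t = log(1+X) = ∑_{n≥1} (−1)^{n−1} Xⁿ/n ∈ K[[X]], and let ∂ be the operator ∂f = (1+X)·f′ on K((X)), where f′ is the formal derivative. Then for every integer h ≥ 1 the coefficient of X^{−1} in (1+X)^{−1} · t^{h−1} · ∂ʰ(b) is zero. -/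
noncomputable section

/-- `t = log(1+X) = ∑_{n ≥ 1} (-1)^(n-1) Xⁿ / n` in `K⟦X⟧`. -/
def tSeries (K : Type*) [Field K] [CharZero K] : PowerSeries K :=
  PowerSeries.mk fun n => if n = 0 then 0 else (-1 : K) ^ (n - 1) / (n : K)

/-- The formal derivative `f'` of a formal Laurent series. -/
def lderiv {K : Type*} [Field K] (f : LaurentSeries K) : LaurentSeries K where
  coeff n := (n + 1) • f.coeff (n + 1)
  isPWO_support' := by
    refine Set.IsPWO.mono
      (f.isPWO_support'.image_of_monotoneOn (f := fun m => m - 1)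
        (fun a _ b _ hab => by simpa using hab)) ?_
    intro n hn
    have h1 : f.coeff (n + 1) ≠ 0 := by
      intro h0
      apply hn
      simp [Function.mem_support, h0]
    exact ⟨n + 1, h1, by ring⟩

/-- The operator `∂ f = (1+X) · f'` on formal Laurent series. -/
def ldel {K : Type*} [Field K] (f : LaurentSeries K) : LaurentSeries K :=
  (HahnSeries.ofPowerSeries ℤ K (1 + PowerSeries.X)) * lderiv f

namespace ResAux

variable {K : Type*} [Field K]

lemma lderiv_coeff (f : LaurentSeries K) (n : ℤ) :
    (lderiv f).coeff n = (n + 1) • f.coeff (n + 1) := rfl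

lemma ofPS_coeff_neg (φ : PowerSeries K) {n : ℤ} (hn : n < 0) :
    (HahnSeries.ofPowerSeries ℤ K φ).coeff n = 0 := by
  rw [HahnSeries.ofPowerSeries_apply, HahnSeries.embDomain_notin_range]
  rintro ⟨m, hm⟩
  have hm' : (m : ℤ) = n := hm
  omega

lemma single_one_mul_coeff (d n : ℤ) (f : LaurentSeries K) :
    (HahnSeries.single d (1 : K) * f).coeff n = f.coeff (n - d) := by
  have := HahnSeries.coeff_single_mul_add (r := (1 : K)) (x := f) (a := n - d) (b := d)
  simpa using this

lemma lderiv_coe (φ : PowerSeries K) :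
    lderiv (HahnSeries.ofPowerSeries ℤ K φ) =
      HahnSeries.ofPowerSeries ℤ K (PowerSeries.derivative K φ) := by
  ext n
  rcases lt_trichotomy n (-1) with h | rfl | h
  · rw [lderiv_coeff, ofPS_coeff_neg _ (by omega), ofPS_coeff_neg _ (by omega), smul_zero]
  · rw [lderiv_coeff,
      ofPS_coeff_neg (PowerSeries.derivative K φ) (by norm_num : (-1 : ℤ) < 0)]
    norm_num
  · obtain ⟨m, rfl⟩ : ∃ m : ℕ, n = (m : ℤ) := ⟨n.toNat, by omega⟩
    have e1 : (m : ℤ) + 1 = ((m + 1 : ℕ) : ℤ) := by push_cast; ring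
    rw [lderiv_coeff, e1, HahnSeries.ofPowerSeries_apply_coeff,
      HahnSeries.ofPowerSeries_apply_coeff, PowerSeries.coeff_derivative, zsmul_eq_mul]
    push_cast
    ring

lemma lderiv_zero : lderiv (0 : LaurentSeries K) = 0 := by
  ext n
  simp [lderiv_coeff]

lemma lderiv_single_mul (d : ℤ) (f : LaurentSeries K) :
    lderiv (HahnSeries.single d (1 : K) * f) =
      (d : LaurentSeries K) * (HahnSeries.single (d - 1) (1 : K) * f) +
        HahnSeries.single d (1 : K) * lderiv f := by
  ext n
  have hC : ((d : ℤ) : LaurentSeries K) = HahnSeries.C ((d : ℤ) : K) :=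
    (map_intCast (HahnSeries.C : K →+* LaurentSeries K) d).symm
  rw [HahnSeries.coeff_add, lderiv_coeff, single_one_mul_coeff, hC, HahnSeries.C_mul_eq_smul,
    HahnSeries.coeff_smul, single_one_mul_coeff, single_one_mul_coeff, lderiv_coeff]
  have e1 : n - (d - 1) = n + 1 - d := by ring
  have e2 : n - d + 1 = n + 1 - d := by ring
  rw [e1, e2, zsmul_eq_mul, zsmul_eq_mul, smul_eq_mul]
  push_cast
  ring

/-- Leibniz rule, when the left factor is a power series. -/
lemma lderiv_coe_mul (φ : PowerSeries K) (f : LaurentSeries K) :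
    lderiv (HahnSeries.ofPowerSeries ℤ K φ * f) =
      lderiv (HahnSeries.ofPowerSeries ℤ K φ) * f +
        HahnSeries.ofPowerSeries ℤ K φ * lderiv f := by
  obtain ⟨a, ψ, rfl⟩ : ∃ a ψ, f =
      HahnSeries.single a (1 : K) * HahnSeries.ofPowerSeries ℤ K ψ :=
    ⟨f.order, f.powerSeriesPart, f.single_order_mul_powerSeriesPart.symm⟩
  have key : HahnSeries.ofPowerSeries ℤ K φ *
        (HahnSeries.single a (1 : K) * HahnSeries.ofPowerSeries ℤ K ψ) =
      HahnSeries.single a (1 : K) * HahnSeries.ofPowerSeries ℤ K (φ * ψ) := by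
    rw [map_mul]
    ring
  have hdm : PowerSeries.derivative K (φ * ψ) =
      φ • PowerSeries.derivative K ψ + ψ • PowerSeries.derivative K φ :=
    Derivation.leibniz _ φ ψ
  rw [smul_eq_mul, smul_eq_mul] at hdm
  rw [key, lderiv_single_mul, lderiv_coe, hdm, map_add,
    lderiv_coe, lderiv_single_mul, lderiv_coe]
  simp only [map_mul]
  ring

lemma res_lderiv (f : LaurentSeries K) : (lderiv f).coeff (-1) = 0 := by
  rw [lderiv_coeff]
  norm_num

/-- Integration by parts for the residue. -/
lemma ibp (φ : PowerSeries K) (f : LaurentSeries K) :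
    (HahnSeries.ofPowerSeries ℤ K φ * lderiv f).coeff (-1) =
      -((lderiv (HahnSeries.ofPowerSeries ℤ K φ) * f).coeff (-1)) := by
  have h0 := res_lderiv (HahnSeries.ofPowerSeries ℤ K φ * f)
  rw [lderiv_coe_mul, HahnSeries.coeff_add] at h0
  exact eq_neg_of_add_eq_zero_left ((add_comm _ _).trans h0)

variable [CharZero K]

/-- `(1+X) · t' = 1` in `K⟦X⟧`. -/
lemma one_add_X_mul_deriv_t :
    (1 + PowerSeries.X) * PowerSeries.derivative K (tSeries K) = 1 := by
  ext n
  have hder : ∀ m : ℕ, PowerSeries.coeff m (PowerSeries.derivative K (tSeries K))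
      = (-1 : K) ^ m := by
    intro m
    rw [PowerSeries.coeff_derivative, tSeries, PowerSeries.coeff_mk,
      if_neg (Nat.succ_ne_zero m)]
    have hne : ((m : K) + 1) ≠ 0 := Nat.cast_add_one_ne_zero m
    push_cast
    exact div_mul_cancel₀ _ hne
  rw [add_mul, one_mul, map_add, hder]
  cases n with
  | zero => simp
  | succ m =>
      rw [PowerSeries.coeff_succ_X_mul, hder, PowerSeries.coeff_one, if_neg (Nat.succ_ne_zero m)]
      rw [pow_succ]
      ring

lemma U_mul_lderiv_T :
    (HahnSeries.ofPowerSeries ℤ K (1 + PowerSeries.X)) *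
      lderiv (HahnSeries.ofPowerSeries ℤ K (tSeries K)) = 1 := by
  rw [lderiv_coe, ← map_mul, one_add_X_mul_deriv_t, map_one]

lemma lderiv_T_pow (k : ℕ) :
    lderiv ((HahnSeries.ofPowerSeries ℤ K (tSeries K)) ^ (k + 1)) =
      ((k + 1 : ℕ) : LaurentSeries K) *
        ((HahnSeries.ofPowerSeries ℤ K (tSeries K)) ^ k *
          lderiv (HahnSeries.ofPowerSeries ℤ K (tSeries K))) := by
  induction k with
  | zero => simp
  | succ m ih =>
      have : (HahnSeries.ofPowerSeries ℤ K (tSeries K)) ^ (m + 2) =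
          HahnSeries.ofPowerSeries ℤ K (tSeries K) *
            (HahnSeries.ofPowerSeries ℤ K (tSeries K)) ^ (m + 1) := by ring
      rw [this, lderiv_coe_mul, ih]
      push_cast
      ring

lemma res_T_pow_lderiv (b : LaurentSeries K) (k : ℕ) :
    (((HahnSeries.ofPowerSeries ℤ K (tSeries K)) ^ k) * lderiv (ldel^[k] b)).coeff (-1) = 0 := by
  induction k generalizing b with
  | zero => simpa using res_lderiv b
  | succ m ih =>
      set T := HahnSeries.ofPowerSeries ℤ K (tSeries K) with hT
      set g := ldel^[m] b with hg
      have hiter : ldel^[m + 1] b = ldel g := by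
        rw [hg, Function.iterate_succ_apply']
      have hTpow : T ^ (m + 1) = HahnSeries.ofPowerSeries ℤ K (tSeries K ^ (m + 1)) := by
        rw [map_pow]
      rw [hiter, hTpow, ibp, ← hTpow, lderiv_T_pow]
      have hrearr : ((m + 1 : ℕ) : LaurentSeries K) * (T ^ m * lderiv T) * ldel g =
          ((m + 1 : ℕ) : LaurentSeries K) *
            ((HahnSeries.ofPowerSeries ℤ K (1 + PowerSeries.X) * lderiv T) *
              (T ^ m * lderiv g)) := by
        rw [ldel]
        ring
      rw [hrearr, U_mul_lderiv_T, one_mul]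
      have hC : ((m + 1 : ℕ) : LaurentSeries K) = HahnSeries.C ((m + 1 : ℕ) : K) :=
        (map_natCast (HahnSeries.C : K →+* LaurentSeries K) (m + 1)).symm
      rw [hC, HahnSeries.C_mul_eq_smul, HahnSeries.coeff_smul, ih b, smul_zero, neg_zero]

end ResAux

/-- The residue computation from the proof of Proposition 3.2.2: for every
Laurent series `b` and every `h ≥ 1`, the coefficient of `X⁻¹` in
`(1+X)⁻¹ · t^(h-1) · ∂ʰ(b)` vanishes. -/
theorem residue_t_pow_del_iterate
    {K : Type*} [Field K] [CharZero K] (b : LaurentSeries K) (h : ℕ) (hh : 1 ≤ h) :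
    ((HahnSeries.ofPowerSeries ℤ K (1 + PowerSeries.X))⁻¹ *
        (HahnSeries.ofPowerSeries ℤ K (tSeries K)) ^ (h - 1) *
        ldel^[h] b).coeff (-1) = 0 := by
  obtain ⟨k, rfl⟩ : ∃ k, h = k + 1 := ⟨h - 1, (Nat.succ_pred_eq_of_pos hh).symm⟩
  set U := HahnSeries.ofPowerSeries ℤ K (1 + PowerSeries.X) with hU
  have hU0 : U ≠ 0 := by
    intro h0
    have : (U.coeff (0 : ℤ)) = 1 := by
      rw [hU, show ((0 : ℤ)) = ((0 : ℕ) : ℤ) from rfl, HahnSeries.ofPowerSeries_apply_coeff]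
      simp
    rw [h0] at this
    simp at this
  have hiter : ldel^[k + 1] b = ldel (ldel^[k] b) := Function.iterate_succ_apply' _ _ _
  have hsimp : (k + 1) - 1 = k := rfl
  rw [hsimp, hiter, ldel, ← hU]
  have : U⁻¹ * (HahnSeries.ofPowerSeries ℤ K (tSeries K)) ^ k * (U * lderiv (ldel^[k] b)) =
      (U⁻¹ * U) * ((HahnSeries.ofPowerSeries ℤ K (tSeries K)) ^ k * lderiv (ldel^[k] b)) := by
    ring
  rw [this, inv_mul_cancel₀ hU0, one_mul]
  exact ResAux.res_T_pow_lderiv b k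

end
end
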